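/- Let m ≥ 1 be an integer and t > 0. For w ∈ ℝ^m define S_N(t)w = e^t ((e^{2t} − 1)|w|² + 1)^{−1/2} w. Then for every w ∈ ℝ^m, |S_N(t)w| ≤ max{1, |w|}. In particular, if |w| ≤ 1 then |S_N(t)w| ≤ 1. -/
import Mathlib


/-- Maximum principle for the nonlinear propagator of the vector-valued
Allen-Cahn equation: `|S_N(t)w| ≤ max{1, |w|}`, and in particular `|w| ≤ 1` implies
`|S_N(t)w| ≤ 1`. -/
theorem stmt_2 (m : ℕ) (hm : 1 ≤ m) (t : ℝ) (ht : 0 < t)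
    (SN : EuclideanSpace ℝ (Fin m) → EuclideanSpace ℝ (Fin m))
    (hSN : ∀ w : EuclideanSpace ℝ (Fin m),
      SN w = (Real.exp t / Real.sqrt ((Real.exp (2 * t) - 1) * ‖w‖ ^ 2 + 1)) • w) :
    (∀ w : EuclideanSpace ℝ (Fin m), ‖SN w‖ ≤ max 1 ‖w‖) ∧
      ∀ w : EuclideanSpace ℝ (Fin m), ‖w‖ ≤ 1 → ‖SN w‖ ≤ 1 := by
  have key : ∀ w : EuclideanSpace ℝ (Fin m), ‖SN w‖ ≤ max 1 ‖w‖ := by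
    intro w
    rw [hSN, norm_smul]
    set a := ‖w‖ with ha
    have ha0 : (0:ℝ) ≤ a := norm_nonneg w
    have hE : (1:ℝ) < Real.exp (2*t) := by
      rw [show (1:ℝ) = Real.exp 0 by simp]
      exact Real.exp_lt_exp.2 (by linarith)
    set D := (Real.exp (2*t) - 1) * a ^ 2 + 1 with hD
    have hD1 : (1:ℝ) ≤ D := by nlinarith
    have hD0 : (0:ℝ) < D := by linarith
    have hs : 0 < Real.sqrt D := Real.sqrt_pos.2 hD0
    have hnorm : ‖Real.exp t / Real.sqrt D‖ = Real.exp t / Real.sqrt D := by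
      rw [Real.norm_eq_abs, abs_of_pos (div_pos (Real.exp_pos t) hs)]
    rw [hnorm]
    set M := max 1 a with hM
    have hM0 : (0:ℝ) < M := lt_of_lt_of_le one_pos (le_max_left _ _)
    rw [div_mul_eq_mul_div, div_le_iff₀ hs]
    have hexp2 : Real.exp (2*t) = Real.exp t ^ 2 := by
      rw [sq, ← Real.exp_add]; ring_nf
    have h1 : Real.exp t * a = Real.sqrt (Real.exp (2*t) * a^2) := by
      rw [hexp2, Real.sqrt_mul (sq_nonneg _), Real.sqrt_sq (Real.exp_nonneg t),
        Real.sqrt_sq ha0]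
    have h2 : M * Real.sqrt D = Real.sqrt (M^2 * D) := by
      rw [Real.sqrt_mul (sq_nonneg _), Real.sqrt_sq hM0.le]
    rw [h1, h2]
    apply Real.sqrt_le_sqrt
    rcases le_total a 1 with hle | hge
    · have : M = 1 := max_eq_left hle
      rw [this]; nlinarith
    · have : M = a := max_eq_right hge
      rw [this]; nlinarith [mul_nonneg (mul_nonneg (by linarith : (0:ℝ) ≤ Real.exp (2*t) - 1) (by nlinarith : (0:ℝ) ≤ a^2 - 1)) (sq_nonneg a)]
  refine ⟨key, fun w hw => ?_⟩
  have := key w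
  rw [max_eq_left hw] at this
  exact this
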